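/- For every n ≥ 2, the number of permutations π ∈ S_n that avoid the generalized pattern 32-1 and satisfy π_1 = 1 equals the Bell number B_{n-1}; and for every k with 2 ≤ k ≤ n, the number of permutations π ∈ S_n that avoid 32-1 and satisfy π_1 = k equals ∇^{k-2}(B_{n-1}) = Σ_{i=0}^{k-2} (-1)^i · C(k-2, i) · B_{n-1-i}. -/

import Mathlib

/-- `π` avoids the generalized pattern 32-1. -/
def Avoids32d1 {n : ℕ} (π : Equiv.Perm (Fin n)) : Prop :=
  ¬ ∃ (i j : Fin n) (h : i.1 + 1 < n), i.1 + 1 < j.1 ∧ π j < π ⟨i.1 + 1, h⟩ ∧ π ⟨i.1 + 1, h⟩ < π i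

/-- The `m`-th Bell number: the number of partitions of a set with `m` elements,
equivalently the number of equivalence relations (setoids) on `Fin m`. -/
noncomputable def bell (m : ℕ) : ℕ := Nat.card (Setoid (Fin m))

namespace BellDist
open Equiv Finset

private def t {n : ℕ} (k k' x : Fin n) : ℕ :=
  if x = k then k.1 + 1 else if x = k' then k.1 else x.1

lemma t_swap {n : ℕ} (k k' x : Fin n) (hkk : k'.1 = k.1 + 1) :
    ((Equiv.swap k k') x).1 = t k k' x := by
  rw [Equiv.swap_apply_def, t]
  split_ifs <;> simp_all

lemma t_lt {n : ℕ} (k k' x y : Fin n) (hkk : k'.1 = k.1 + 1)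
    (h : t k k' x < t k k' y) : x.1 < y.1 ∨ (x.1 = k'.1 ∧ y.1 = k.1) := by
  unfold t at h
  split_ifs at h <;> simp only [Fin.ext_iff] at * <;> omega

lemma swap_avoid {n : ℕ} (π : Equiv.Perm (Fin n)) (k k' : Fin n) (hkk : k'.1 = k.1 + 1)
    (h0 : 0 < n)
    (hyp : π ⟨0, h0⟩ = k' ∨ (π ⟨0, h0⟩ = k ∧ (∀ h1 : 1 < n, π ⟨1, h1⟩ = k' → k.1 = 0)))
    (hav : Avoids32d1 π) : Avoids32d1 (Equiv.swap k k' * π) := by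
  rintro ⟨i, j, h, hij, hlt1, hlt2⟩
  simp only [Equiv.Perm.mul_apply] at hlt1 hlt2
  rw [Fin.lt_def, t_swap _ _ _ hkk, t_swap _ _ _ hkk] at hlt1 hlt2
  rcases t_lt _ _ _ _ hkk hlt1 with hwv | ⟨hw, hv⟩
  · rcases t_lt _ _ _ _ hkk hlt2 with hvu | ⟨hv, hu⟩
    · -- genuine occurrence in π
      exact hav ⟨i, j, h, hij, Fin.lt_def.2 hwv, Fin.lt_def.2 hvu⟩
    · -- π i = k, π ⟨i+1⟩ = k' : C1
      rcases hyp with h0' | ⟨h0', h1'⟩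
      · -- π 0 = k' = π ⟨i+1⟩ ⇒ i+1 = 0, absurd
        have : π ⟨i.1 + 1, h⟩ = π ⟨0, h0⟩ := by
          rw [h0']; exact Fin.ext hv
        have := π.injective this
        simp only [Fin.ext_iff] at this
        omega
      · -- π 0 = k = π i ⇒ i = 0; then π 1 = k' ⇒ k = 0; then t (π j) < k = 0
        have hi : i = ⟨0, h0⟩ := π.injective (by rw [h0']; exact Fin.ext hu)
        have hi0 : i.1 = 0 := by rw [hi]
        have hk0 : k.1 = 0 := by
          apply h1' (by omega)
          have : (⟨1, by omega⟩ : Fin n) = ⟨i.1 + 1, h⟩ := by simp [Fin.ext_iff, hi0]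
          rw [this]; exact Fin.ext hv
        -- hlt1 : t (π j) < t (π ⟨i+1⟩) = k.1 = 0
        have : t k k' (π ⟨i.1 + 1, h⟩) = k.1 := by
          unfold t
          have hne : π ⟨i.1 + 1, h⟩ ≠ k := by
            intro e; simp only [Fin.ext_iff] at e hv; omega
          rw [if_neg hne, if_pos (Fin.ext hv)]
        omega
  · -- π j = k', π ⟨i+1⟩ = k : C2
    rcases hyp with h0' | ⟨h0', h1'⟩
    · have : j = ⟨0, h0⟩ := π.injective (by rw [h0']; exact Fin.ext hw)
      simp only [Fin.ext_iff] at this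
      omega
    · have : (⟨i.1 + 1, h⟩ : Fin n) = ⟨0, h0⟩ := π.injective (by rw [h0']; exact Fin.ext hv)
      simp only [Fin.ext_iff] at this
      omega


lemma not_k_at_one {n : ℕ} (π : Equiv.Perm (Fin (n+1))) (k k' : Fin (n+1))
    (hkk : k'.1 = k.1 + 1) (hk0 : 0 < k.1) (hav : Avoids32d1 π)
    (h0 : π ⟨0, n.succ_pos⟩ = k') (h1n : 1 < n + 1) : π ⟨1, h1n⟩ ≠ k := by
  intro h1
  set j := π.symm ⟨0, n.succ_pos⟩ with hj
  have hπj : π j = ⟨0, n.succ_pos⟩ := π.apply_symm_apply _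
  have hj0 : j.1 ≠ 0 := by
    intro e
    have : j = ⟨0, n.succ_pos⟩ := Fin.ext e
    rw [this, h0] at hπj
    simp only [Fin.ext_iff] at hπj; omega
  have hj1 : j.1 ≠ 1 := by
    intro e
    have : j = ⟨1, h1n⟩ := Fin.ext e
    rw [this, h1] at hπj
    simp only [Fin.ext_iff] at hπj; omega
  apply hav
  refine ⟨⟨0, n.succ_pos⟩, j, h1n, by show 0+1 < j.1; omega, ?_, ?_⟩
  · show π j < π ⟨0 + 1, h1n⟩
    have : (⟨0 + 1, h1n⟩ : Fin (n+1)) = ⟨1, h1n⟩ := rfl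
    rw [this, hπj, h1, Fin.lt_def]
    exact hk0
  · show π ⟨0 + 1, h1n⟩ < π ⟨0, n.succ_pos⟩
    have : (⟨0 + 1, h1n⟩ : Fin (n+1)) = ⟨1, h1n⟩ := rfl
    rw [this, h1, h0, Fin.lt_def]
    omega

lemma card_first_zero_eq_one (n : ℕ) (h1 : 1 < n + 1) :
    Nat.card {π : Equiv.Perm (Fin (n+1)) // Avoids32d1 π ∧ π ⟨0, n.succ_pos⟩ = ⟨0, n.succ_pos⟩} =
    Nat.card {π : Equiv.Perm (Fin (n+1)) // Avoids32d1 π ∧ π ⟨0, n.succ_pos⟩ = ⟨1, h1⟩} := by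
  set k : Fin (n+1) := ⟨0, n.succ_pos⟩
  set k' : Fin (n+1) := ⟨1, h1⟩
  have hkk : k'.1 = k.1 + 1 := rfl
  refine Nat.card_congr ⟨fun x => ⟨Equiv.swap k k' * x.1, ?_, ?_⟩,
    fun x => ⟨Equiv.swap k k' * x.1, ?_, ?_⟩, fun x => ?_, fun x => ?_⟩
  · exact swap_avoid _ k k' hkk _ (Or.inr ⟨x.2.2, fun _ _ => rfl⟩) x.2.1
  · show Equiv.swap k k' (x.1 _) = k'
    rw [x.2.2, Equiv.swap_apply_left]
  · exact swap_avoid _ k k' hkk _ (Or.inl x.2.2) x.2.1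
  · show Equiv.swap k k' (x.1 _) = k
    rw [x.2.2, Equiv.swap_apply_right]
  · apply Subtype.ext
    show Equiv.swap k k' * (Equiv.swap k k' * x.1) = x.1
    rw [← mul_assoc, Equiv.swap_mul_self, one_mul]
  · apply Subtype.ext
    show Equiv.swap k k' * (Equiv.swap k k' * x.1) = x.1
    rw [← mul_assoc, Equiv.swap_mul_self, one_mul]

lemma card_first_step (n : ℕ) (k : Fin (n+1)) (hk : k.1 + 1 < n + 1) (hk0 : 0 < k.1)
    (h1n : 1 < n + 1) :
    Nat.card {π : Equiv.Perm (Fin (n+1)) // Avoids32d1 π ∧ π ⟨0, n.succ_pos⟩ = k} =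
    Nat.card {π : Equiv.Perm (Fin (n+1)) // Avoids32d1 π ∧ π ⟨0, n.succ_pos⟩ = ⟨k.1+1, hk⟩} +
    Nat.card {π : Equiv.Perm (Fin (n+1)) // Avoids32d1 π ∧ π ⟨0, n.succ_pos⟩ = k ∧
      π ⟨1, h1n⟩ = ⟨k.1+1, hk⟩} := by
  classical
  set k' : Fin (n+1) := ⟨k.1+1, hk⟩ with hk'
  have hkk : k'.1 = k.1 + 1 := rfl
  have e : {π : Equiv.Perm (Fin (n+1)) // Avoids32d1 π ∧ π ⟨0, n.succ_pos⟩ = k} ≃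
      ({π : Equiv.Perm (Fin (n+1)) // Avoids32d1 π ∧ π ⟨0, n.succ_pos⟩ = k'} ⊕
       {π : Equiv.Perm (Fin (n+1)) // Avoids32d1 π ∧ π ⟨0, n.succ_pos⟩ = k ∧
         π ⟨1, h1n⟩ = k'}) := by
    refine ⟨fun x => if h : x.1 ⟨1, h1n⟩ = k' then Sum.inr ⟨x.1, x.2.1, x.2.2, h⟩ else
        Sum.inl ⟨Equiv.swap k k' * x.1,
          swap_avoid _ k k' hkk _ (Or.inr ⟨x.2.2, fun h1 hc => absurd hc h⟩) x.2.1,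
          by show Equiv.swap k k' (x.1 _) = k'; rw [x.2.2, Equiv.swap_apply_left]⟩,
      fun y => Sum.rec (fun x => ⟨Equiv.swap k k' * x.1,
          swap_avoid _ k k' hkk _ (Or.inl x.2.2) x.2.1,
          by show Equiv.swap k k' (x.1 _) = k; rw [x.2.2, Equiv.swap_apply_right]⟩)
        (fun x => ⟨x.1, x.2.1, x.2.2.1⟩) y, ?_, ?_⟩
    · intro x
      by_cases h : x.1 ⟨1, h1n⟩ = k'
      · simp only [dif_pos h]
      · simp only [dif_neg h]
        apply Subtype.ext
        show Equiv.swap k k' * (Equiv.swap k k' * x.1) = x.1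
        rw [← mul_assoc, Equiv.swap_mul_self, one_mul]
    · intro y
      rcases y with x | x
      · have hne : (Equiv.swap k k' * x.1) ⟨1, h1n⟩ ≠ k' := by
          show Equiv.swap k k' (x.1 _) ≠ k'
          intro hc
          have : x.1 ⟨1, h1n⟩ = k := by
            have := (Equiv.swap k k').injective (a₁ := x.1 ⟨1, h1n⟩) (a₂ := k)
              (by rw [hc, Equiv.swap_apply_left])
            exact this
          exact not_k_at_one x.1 k k' hkk hk0 x.2.1 x.2.2 h1n this
        simp only [dif_neg hne]
        congr 1
        apply Subtype.ext
        show Equiv.swap k k' * (Equiv.swap k k' * x.1) = x.1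
        rw [← mul_assoc, Equiv.swap_mul_self, one_mul]
      · simp only [dif_pos x.2.2.2]
  rw [Nat.card_congr e, Nat.card_sum]


variable {n : ℕ}

/-- delete position `p` (whose value is `q`) from a permutation. -/
def delPerm (p q : Fin (n+1)) (π : Equiv.Perm (Fin (n+1))) : Equiv.Perm (Fin n) :=
  Equiv.removeNone (((finSuccEquiv' p).symm.trans π).trans (finSuccEquiv' q))

def insPerm (p q : Fin (n+1)) (σ : Equiv.Perm (Fin n)) : Equiv.Perm (Fin (n+1)) :=
  ((finSuccEquiv' p).trans σ.optionCongr).trans (finSuccEquiv' q).symm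

lemma insPerm_at (p q : Fin (n+1)) (σ : Equiv.Perm (Fin n)) : insPerm p q σ p = q := by
  simp [insPerm, finSuccEquiv'_at, finSuccEquiv'_symm_none]

lemma insPerm_succAbove (p q : Fin (n+1)) (σ : Equiv.Perm (Fin n)) (x : Fin n) :
    insPerm p q σ (p.succAbove x) = q.succAbove (σ x) := by
  simp [insPerm, finSuccEquiv'_succAbove, finSuccEquiv'_symm_some]

lemma delPerm_key (p q : Fin (n+1)) (π : Equiv.Perm (Fin (n+1))) (h : π p = q) (x : Fin n) :
    π (p.succAbove x) = q.succAbove (delPerm p q π x) := by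
  set E := ((finSuccEquiv' p).symm.trans π).trans (finSuccEquiv' q) with hE
  have hne : π (p.succAbove x) ≠ q := by
    intro e
    exact Fin.succAbove_ne p x (π.injective (e.trans h.symm))
  have hEx : E (some x) = finSuccEquiv' q (π (p.succAbove x)) := by
    simp [hE, finSuccEquiv'_symm_some]
  have hsome : ∃ x', E (some x) = some x' := by
    rcases h' : finSuccEquiv' q (π (p.succAbove x)) with _ | y
    · exfalso
      apply hne
      have := congrArg (finSuccEquiv' q).symm h'
      simpa [finSuccEquiv'_symm_none] using this
    · exact ⟨y, by rw [hEx, h']⟩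
  have h2 : some (Equiv.removeNone E x) = E (some x) := Equiv.removeNone_some E hsome
  have h3 := congrArg (finSuccEquiv' q).symm (h2.trans hEx)
  simp only [finSuccEquiv'_symm_some, Equiv.symm_apply_apply] at h3
  exact h3.symm

lemma delPerm_insPerm (p q : Fin (n+1)) (σ : Equiv.Perm (Fin n)) :
    delPerm p q (insPerm p q σ) = σ := by
  apply Equiv.ext
  intro x
  apply Fin.succAbove_right_injective (p := q)
  rw [← delPerm_key p q _ (insPerm_at p q σ) x, insPerm_succAbove]

lemma insPerm_delPerm (p q : Fin (n+1)) (π : Equiv.Perm (Fin (n+1))) (h : π p = q) :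
    insPerm p q (delPerm p q π) = π := by
  apply Equiv.ext
  intro y
  rcases eq_or_ne y p with rfl | hy
  · rw [insPerm_at, h]
  · obtain ⟨x, rfl⟩ := Fin.exists_succAbove_eq hy
    rw [insPerm_succAbove, ← delPerm_key p q π h x]

lemma succAbove_val (p : Fin (n+1)) (x : Fin n) :
    (p.succAbove x).1 = if x.1 < p.1 then x.1 else x.1 + 1 := by
  rw [Fin.succAbove]
  split_ifs with h1 h2 h2 <;>
    simp_all [Fin.lt_def, Fin.coe_castSucc, Fin.val_succ]

lemma avoid_del_zero (π : Equiv.Perm (Fin (n+1)))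
    (h : π ⟨0, n.succ_pos⟩ = ⟨0, n.succ_pos⟩) :
    Avoids32d1 π ↔ Avoids32d1 (delPerm ⟨0, n.succ_pos⟩ ⟨0, n.succ_pos⟩ π) := by
  set z : Fin (n+1) := ⟨0, n.succ_pos⟩ with hz
  set σ := delPerm z z π with hσ
  have hsa : ∀ x : Fin n, z.succAbove x = ⟨x.1+1, by omega⟩ := by
    intro x
    apply Fin.ext
    rw [succAbove_val]
    simp [hz]
  have K : ∀ x : Fin n, π ⟨x.1+1, by omega⟩ = z.succAbove (σ x) := by
    intro x
    rw [← hsa x]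
    exact delPerm_key z z π h x
  constructor
  · intro hav ⟨i, j, hh, hij, l1, l2⟩
    apply hav
    refine ⟨⟨i.1+1, by omega⟩, ⟨j.1+1, by omega⟩, by show i.1+1+1 < n+1; omega,
      by show i.1+1+1 < j.1+1; omega, ?_, ?_⟩
    · show π ⟨j.1+1, by omega⟩ < π ⟨i.1+1+1, by omega⟩
      rw [K j, K ⟨i.1+1, hh⟩]
      exact Fin.succAbove_lt_succAbove_iff.mpr l1
    · show π ⟨i.1+1+1, by omega⟩ < π ⟨i.1+1, by omega⟩
      rw [K ⟨i.1+1, hh⟩, K i]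
      exact Fin.succAbove_lt_succAbove_iff.mpr l2
  · intro hav ⟨a, b, hh, hab, l1, l2⟩
    rcases Nat.eq_zero_or_pos a.1 with ha0 | ha1
    · have hpa : π a = z := by
        have : a = z := Fin.ext ha0
        rw [this, h]
      rw [hpa] at l2
      have : (π ⟨a.1+1, hh⟩).1 < 0 := l2
      omega
    · apply hav
      have hb1 : 1 ≤ b.1 := by omega
      refine ⟨⟨a.1-1, by omega⟩, ⟨b.1-1, by omega⟩, by show a.1-1+1 < n; omega,
        by show a.1-1+1 < b.1-1; omega, ?_, ?_⟩
      · apply (Fin.succAbove_lt_succAbove_iff (p := z)).mp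
        rw [← K, ← K]
        show π ⟨b.1-1+1, by omega⟩ < π ⟨(a.1-1)+1+1, by omega⟩
        have e1 : (⟨b.1-1+1, by omega⟩ : Fin (n+1)) = b := Fin.ext (by show b.1-1+1 = b.1; omega)
        have e2 : (⟨(a.1-1)+1+1, by omega⟩ : Fin (n+1)) = ⟨a.1+1, hh⟩ :=
          Fin.ext (by show a.1-1+1+1 = a.1+1; omega)
        rw [e1, e2]
        exact l1
      · apply (Fin.succAbove_lt_succAbove_iff (p := z)).mp
        rw [← K, ← K]
        show π ⟨(a.1-1)+1+1, by omega⟩ < π ⟨(a.1-1)+1, by omega⟩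
        have e2 : (⟨(a.1-1)+1+1, by omega⟩ : Fin (n+1)) = ⟨a.1+1, hh⟩ :=
          Fin.ext (by show a.1-1+1+1 = a.1+1; omega)
        have e3 : (⟨(a.1-1)+1, by omega⟩ : Fin (n+1)) = a := Fin.ext (by show a.1-1+1 = a.1; omega)
        rw [e2, e3]
        exact l2

set_option maxHeartbeats 1000000 in
lemma avoid_del_step (π : Equiv.Perm (Fin (n+1))) (k : Fin (n+1)) (hk : k.1 + 1 < n + 1)
    (h1n : 1 < n + 1)
    (h0 : π ⟨0, n.succ_pos⟩ = k) (h1 : π ⟨1, h1n⟩ = ⟨k.1+1, hk⟩) :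
    Avoids32d1 π ↔ Avoids32d1 (delPerm ⟨1, h1n⟩ ⟨k.1+1, hk⟩ π) := by
  have h0n : 0 < n := by omega
  set p : Fin (n+1) := ⟨1, h1n⟩ with hp
  set q : Fin (n+1) := ⟨k.1+1, hk⟩ with hq
  set σ := delPerm p q π with hσ
  have hkq : k < q := by rw [Fin.lt_def]; exact Nat.lt_succ_self _
  have K := delPerm_key p q π h1
  have K0 : q.succAbove (σ ⟨0, h0n⟩) = k := by
    rw [← K]
    have : p.succAbove ⟨0, h0n⟩ = ⟨0, n.succ_pos⟩ := by
      apply Fin.ext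
      rw [succAbove_val]
      simp [hp]
    rw [this, h0]
  have KS : ∀ x : Fin n, 1 ≤ x.1 → π ⟨x.1+1, by omega⟩ = q.succAbove (σ x) := by
    intro x hx
    have : p.succAbove x = ⟨x.1+1, by omega⟩ := by
      apply Fin.ext
      rw [succAbove_val]
      have : ¬ (x.1 < p.1) := by simp [hp]; omega
      rw [if_neg this]
    rw [← this]
    exact K x
  constructor
  · intro hav ⟨i, j, hh, hij, l1, l2⟩
    apply hav
    have hj1 : 1 ≤ j.1 := by omega
    refine ⟨⟨i.1+1, by omega⟩, ⟨j.1+1, by omega⟩, by show i.1+1+1 < n+1; omega,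
      by show i.1+1+1 < j.1+1; omega, ?_, ?_⟩
    · show π ⟨j.1+1, by omega⟩ < π ⟨i.1+1+1, by omega⟩
      rw [KS j hj1, KS ⟨i.1+1, hh⟩ (by show 1 ≤ i.1+1; omega)]
      exact Fin.succAbove_lt_succAbove_iff.mpr l1
    · show π ⟨i.1+1+1, by omega⟩ < π ⟨i.1+1, by omega⟩
      rcases Nat.eq_zero_or_pos i.1 with hi0 | hi1
      · have e1 : (⟨i.1+1, by omega⟩ : Fin (n+1)) = p := Fin.ext (by show i.1+1 = 1; omega)
        rw [e1, h1, KS ⟨i.1+1, hh⟩ (by show 1 ≤ i.1+1; omega)]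
        have hi : i = ⟨0, h0n⟩ := Fin.ext hi0
        calc q.succAbove (σ ⟨i.1+1, hh⟩) < q.succAbove (σ i) :=
              Fin.succAbove_lt_succAbove_iff.mpr l2
          _ = k := by rw [hi]; exact K0
          _ < q := hkq
      · rw [KS ⟨i.1+1, hh⟩ (by show 1 ≤ i.1+1; omega), KS i hi1]
        exact Fin.succAbove_lt_succAbove_iff.mpr l2
  · intro hav ⟨a, b, hh, hab, l1, l2⟩
    have hb2 : a.1 + 1 < b.1 := hab
    rcases Nat.lt_or_ge a.1 2 with ha2 | ha2
    · rcases Nat.eq_zero_or_pos a.1 with ha0 | ha1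
      · -- a = 0 : π ⟨1⟩ = q < π 0 = k impossible
        have e1 : (⟨a.1+1, hh⟩ : Fin (n+1)) = p := Fin.ext (by show a.1+1 = 1; omega)
        have e2 : a = ⟨0, n.succ_pos⟩ := Fin.ext ha0
        rw [e1, h1, e2, h0] at l2
        have : k.1 + 1 < k.1 := l2
        omega
      · -- a = 1
        have ha1' : a.1 = 1 := by omega
        apply hav
        refine ⟨⟨0, h0n⟩, ⟨b.1-1, by omega⟩, by show 0+1 < n; omega,
          by show 0+1 < b.1-1; omega, ?_, ?_⟩
        · apply (Fin.succAbove_lt_succAbove_iff (p := q)).mp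
          rw [← KS ⟨b.1-1, by omega⟩ (by show 1 ≤ b.1-1; omega),
            ← KS ⟨0+1, by omega⟩ (by show 1 ≤ 0+1; omega)]
          have e1 : (⟨(b.1-1)+1, by omega⟩ : Fin (n+1)) = b := Fin.ext (by show b.1-1+1 = b.1; omega)
          have e2 : (⟨0+1+1, by omega⟩ : Fin (n+1)) = ⟨a.1+1, hh⟩ := Fin.ext (by show 0+1+1 = a.1+1; omega)
          rw [e1, e2]
          exact l1
        · apply (Fin.succAbove_lt_succAbove_iff (p := q)).mp
          rw [← KS ⟨0+1, by omega⟩ (by show 1 ≤ 0+1; omega), K0]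
          have e2 : (⟨0+1+1, by omega⟩ : Fin (n+1)) = ⟨a.1+1, hh⟩ := Fin.ext (by show 0+1+1 = a.1+1; omega)
          rw [e2]
          -- goal : π ⟨a.1+1, hh⟩ < k
          have hne : π ⟨a.1+1, hh⟩ ≠ k := by
            intro e
            have := π.injective (e.trans h0.symm)
            simp only [Fin.ext_iff] at this
            omega
          have hlt : (π ⟨a.1+1, hh⟩).1 < k.1 + 1 := by
            have hpa : π a = q := by
              have e3 : a = p := Fin.ext (by show a.1 = 1; omega)
              rw [e3]; exact h1
            rw [hpa] at l2
            exact l2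
          rw [Fin.lt_def]
          have : (π ⟨a.1+1, hh⟩).1 ≠ k.1 := fun e => hne (Fin.ext e)
          omega
    · -- a ≥ 2
      apply hav
      refine ⟨⟨a.1-1, by omega⟩, ⟨b.1-1, by omega⟩, by show a.1-1+1 < n; omega,
        by show a.1-1+1 < b.1-1; omega, ?_, ?_⟩
      · apply (Fin.succAbove_lt_succAbove_iff (p := q)).mp
        rw [← KS ⟨b.1-1, by omega⟩ (by show 1 ≤ b.1-1; omega),
          ← KS ⟨a.1-1+1, by omega⟩ (by show 1 ≤ a.1-1+1; omega)]
        have e1 : (⟨(b.1-1)+1, by omega⟩ : Fin (n+1)) = b := Fin.ext (by show b.1-1+1 = b.1; omega)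
        have e2 : (⟨(a.1-1+1)+1, by omega⟩ : Fin (n+1)) = ⟨a.1+1, hh⟩ :=
          Fin.ext (by show a.1-1+1+1 = a.1+1; omega)
        rw [e1, e2]
        exact l1
      · apply (Fin.succAbove_lt_succAbove_iff (p := q)).mp
        rw [← KS ⟨a.1-1+1, by omega⟩ (by show 1 ≤ a.1-1+1; omega),
          ← KS ⟨a.1-1, by omega⟩ (by show 1 ≤ a.1-1; omega)]
        have e2 : (⟨(a.1-1+1)+1, by omega⟩ : Fin (n+1)) = ⟨a.1+1, hh⟩ :=
          Fin.ext (by show a.1-1+1+1 = a.1+1; omega)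
        have e3 : (⟨(a.1-1)+1, by omega⟩ : Fin (n+1)) = a := Fin.ext (by show a.1-1+1 = a.1; omega)
        rw [e2, e3]
        exact l2


lemma card_first_zero (n : ℕ) :
    Nat.card {π : Equiv.Perm (Fin (n+1)) // Avoids32d1 π ∧ π ⟨0, n.succ_pos⟩ = ⟨0, n.succ_pos⟩} =
    Nat.card {σ : Equiv.Perm (Fin n) // Avoids32d1 σ} := by
  set z : Fin (n+1) := ⟨0, n.succ_pos⟩ with hz
  refine Nat.card_congr ⟨fun x => ⟨delPerm z z x.1, (avoid_del_zero x.1 x.2.2).mp x.2.1⟩,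
    fun y => ⟨insPerm z z y.1, ?_, insPerm_at z z y.1⟩, fun x => ?_, fun y => ?_⟩
  · rw [avoid_del_zero _ (insPerm_at z z y.1), delPerm_insPerm]
    exact y.2
  · exact Subtype.ext (insPerm_delPerm z z x.1 x.2.2)
  · exact Subtype.ext (delPerm_insPerm z z y.1)

lemma card_step_del (n : ℕ) (k : Fin (n+1)) (hk : k.1+1 < n+1) (h1n : 1 < n+1)
    (hkn : k.1 < n) (h0n : 0 < n) :
    Nat.card {π : Equiv.Perm (Fin (n+1)) // Avoids32d1 π ∧ π ⟨0, n.succ_pos⟩ = k ∧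
      π ⟨1, h1n⟩ = ⟨k.1+1, hk⟩} =
    Nat.card {σ : Equiv.Perm (Fin n) // Avoids32d1 σ ∧ σ ⟨0, h0n⟩ = ⟨k.1, hkn⟩} := by
  set p : Fin (n+1) := ⟨1, h1n⟩ with hp
  set q : Fin (n+1) := ⟨k.1+1, hk⟩ with hq
  have hsa0 : p.succAbove ⟨0, h0n⟩ = ⟨0, n.succ_pos⟩ := by
    apply Fin.ext
    rw [succAbove_val]
    simp [hp]
  have hsak : q.succAbove ⟨k.1, hkn⟩ = k := by
    apply Fin.ext
    rw [succAbove_val]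
    simp [hq]
  refine Nat.card_congr ⟨fun x => ⟨delPerm p q x.1, (avoid_del_step x.1 k hk h1n x.2.2.1 x.2.2.2).mp x.2.1, ?_⟩,
    fun y => ⟨insPerm p q y.1, ?_, ?_, insPerm_at p q y.1⟩, fun x => ?_, fun y => ?_⟩
  · apply Fin.succAbove_right_injective (p := q)
    show q.succAbove _ = _
    rw [← delPerm_key p q x.1 x.2.2.2 ⟨0, h0n⟩, hsa0, x.2.2.1, hsak]
  · rw [avoid_del_step _ k hk h1n ?h0 (insPerm_at p q y.1), delPerm_insPerm]
    · exact y.2.1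
    case h0 =>
      rw [← hsa0, insPerm_succAbove, y.2.2, hsak]
  · rw [← hsa0, insPerm_succAbove, y.2.2, hsak]
  · exact Subtype.ext (insPerm_delPerm p q x.1 x.2.2.2)
  · exact Subtype.ext (delPerm_insPerm p q y.1)

lemma nat_card_sigma {ι : Type*} [Fintype ι] (f : ι → Type*) [∀ i, Finite (f i)] :
    Nat.card (Σ i, f i) = ∑ i, Nat.card (f i) := by
  letI : ∀ i, Fintype (f i) := fun i => Fintype.ofFinite _
  simp [Nat.card_eq_fintype_card, Fintype.card_sigma]

lemma card_total (n : ℕ) :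
    Nat.card {π : Equiv.Perm (Fin (n+1)) // Avoids32d1 π} =
    ∑ k : Fin (n+1), Nat.card {π : Equiv.Perm (Fin (n+1)) // Avoids32d1 π ∧ π ⟨0, n.succ_pos⟩ = k} := by
  have e : {π : Equiv.Perm (Fin (n+1)) // Avoids32d1 π} ≃
      Σ k : Fin (n+1), {π : Equiv.Perm (Fin (n+1)) // Avoids32d1 π ∧ π ⟨0, n.succ_pos⟩ = k} := by
    refine ((Equiv.sigmaFiberEquiv (fun x : {π : Equiv.Perm (Fin (n+1)) // Avoids32d1 π} =>
      x.1 ⟨0, n.succ_pos⟩)).symm).trans (Equiv.sigmaCongrRight fun k => ?_)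
    exact Equiv.subtypeSubtypeEquivSubtypeInter (fun π : Equiv.Perm (Fin (n+1)) => Avoids32d1 π) (fun π => π ⟨0, n.succ_pos⟩ = k)
  rw [Nat.card_congr e, nat_card_sigma]


variable {m : ℕ}

instance setoid_finite {α : Type*} [Finite α] : Finite (Setoid α) := by
  have : Function.Injective (fun r : Setoid α => r.r) := by
    intro r s h
    apply Setoid.ext
    intro a b
    rw [show r.r = s.r from h]
  exact Finite.of_injective _ this

lemma setoid_card_congr {α β : Type*} (e : α ≃ β) :
    Nat.card (Setoid α) = Nat.card (Setoid β) := by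
  refine Nat.card_congr ⟨fun r => Setoid.comap e.symm r, fun r => Setoid.comap e r, ?_, ?_⟩
  · intro r
    apply Setoid.ext
    intro a b
    show r.r (e.symm (e a)) (e.symm (e b)) ↔ r.r a b
    simp
  · intro r
    apply Setoid.ext
    intro a b
    show r.r (e (e.symm a)) (e (e.symm b)) ↔ r.r a b
    simp

lemma bell_card {α : Type*} [Fintype α] : Nat.card (Setoid α) = bell (Fintype.card α) :=
  setoid_card_congr (Fintype.equivFinOfCardEq rfl)

variable {m : ℕ}

open scoped Classical in
/-- elements (besides `last`) in the block of `last`. -/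
noncomputable def blockLast (r : Setoid (Fin (m+1))) : Finset (Fin m) :=
  Finset.univ.filter (fun x => r.r x.castSucc (Fin.last m))

open scoped Classical in
lemma mem_blockLast {r : Setoid (Fin (m+1))} {x : Fin m} :
    x ∈ blockLast r ↔ r.r x.castSucc (Fin.last m) := by
  simp [blockLast]

/-- is x in the block of last -/
def bl (s : Finset (Fin m)) (x : Fin (m+1)) : Prop :=
  x = Fin.last m ∨ ∃ h : x ≠ Fin.last m, x.castPred h ∈ s

def low (s : Finset (Fin m)) (x : Fin (m+1)) (hx : ¬ bl s x) : {v : Fin m // v ∉ s} :=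
  ⟨x.castPred (fun e => hx (Or.inl e)), fun hm => hx (Or.inr ⟨fun e => hx (Or.inl e), hm⟩)⟩

def glue (s : Finset (Fin m)) (r' : Setoid {v : Fin m // v ∉ s}) : Setoid (Fin (m+1)) where
  r x y := (bl s x ∧ bl s y) ∨
    ∃ (hx : ¬ bl s x) (hy : ¬ bl s y), r'.r (low s x hx) (low s y hy)
  iseqv := by
    constructor
    · intro x
      by_cases h : bl s x
      · exact Or.inl ⟨h, h⟩
      · exact Or.inr ⟨h, h, r'.refl _⟩
    · intro x y h
      rcases h with ⟨h1, h2⟩ | ⟨h1, h2, h3⟩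
      · exact Or.inl ⟨h2, h1⟩
      · exact Or.inr ⟨h2, h1, r'.symm h3⟩
    · intro x y z hxy hyz
      rcases hxy with ⟨h1, h2⟩ | ⟨h1, h2, h3⟩
      · rcases hyz with ⟨h4, h5⟩ | ⟨h4, h5, h6⟩
        · exact Or.inl ⟨h1, h5⟩
        · exact absurd h2 h4
      · rcases hyz with ⟨h4, h5⟩ | ⟨h4, h5, h6⟩
        · exact absurd h4 h2
        · exact Or.inr ⟨h1, h5, r'.trans h3 h6⟩

lemma bl_iff (r : Setoid (Fin (m+1))) (x : Fin (m+1)) :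
    bl (blockLast r) x ↔ r.r x (Fin.last m) := by
  constructor
  · rintro (rfl | ⟨h, hm⟩)
    · exact r.refl _
    · rw [mem_blockLast, Fin.castSucc_castPred] at hm
      exact hm
  · intro h
    by_cases hx : x = Fin.last m
    · exact Or.inl hx
    · exact Or.inr ⟨hx, by rw [mem_blockLast, Fin.castSucc_castPred]; exact h⟩

lemma glue_restr (r : Setoid (Fin (m+1))) :
    glue (blockLast r) (Setoid.comap (fun v : {v : Fin m // v ∉ blockLast r} =>
      (v.1.castSucc : Fin (m+1))) r) = r := by
  apply Setoid.ext
  intro x y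
  constructor
  · rintro (⟨h1, h2⟩ | ⟨h1, h2, h3⟩)
    · rw [bl_iff] at h1 h2
      exact r.trans h1 (r.symm h2)
    · have h3' : r.r (Fin.castSucc (Fin.castPred x (fun e => h1 (Or.inl e))))
          (Fin.castSucc (Fin.castPred y (fun e => h2 (Or.inl e)))) := h3
      rwa [Fin.castSucc_castPred, Fin.castSucc_castPred] at h3'
  · intro h
    by_cases hx : bl (blockLast r) x
    · left
      refine ⟨hx, ?_⟩
      rw [bl_iff] at hx ⊢
      exact r.trans (r.symm h) hx
    · right
      have hy : ¬ bl (blockLast r) y := by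
        intro hy
        apply hx
        rw [bl_iff] at hy ⊢
        exact r.trans h hy
      refine ⟨hx, hy, ?_⟩
      show r.r (Fin.castSucc (Fin.castPred x (fun e => hx (Or.inl e))))
        (Fin.castSucc (Fin.castPred y (fun e => hy (Or.inl e))))
      rwa [Fin.castSucc_castPred, Fin.castSucc_castPred]

lemma bl_castSucc (s : Finset (Fin m)) (x : Fin m) : bl s x.castSucc ↔ x ∈ s := by
  unfold bl
  have hne : x.castSucc ≠ Fin.last m := Fin.ne_last_of_lt (Fin.castSucc_lt_last x)
  constructor
  · rintro (h | ⟨h, hm⟩)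
    · exact absurd h hne
    · rwa [Fin.castPred_castSucc] at hm
  · intro h
    exact Or.inr ⟨hne, by rwa [Fin.castPred_castSucc]⟩

lemma blockLast_glue (s : Finset (Fin m)) (r' : Setoid {v : Fin m // v ∉ s}) :
    blockLast (glue s r') = s := by
  ext x
  rw [mem_blockLast]
  show (bl s _ ∧ bl s _) ∨ _ ↔ _
  constructor
  · rintro (⟨h1, _⟩ | ⟨_, hy, _⟩)
    · rwa [bl_castSucc] at h1
    · exact absurd (Or.inl rfl) hy
  · intro h
    exact Or.inl ⟨(bl_castSucc s x).mpr h, Or.inl rfl⟩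

lemma restr_glue (s : Finset (Fin m)) (r' : Setoid {v : Fin m // v ∉ s}) :
    Setoid.comap (fun v : {v : Fin m // v ∉ s} =>
      (v.1.castSucc : Fin (m+1))) (glue s r') = r' := by
  apply Setoid.ext
  intro x y
  constructor
  · rintro (⟨h1, h2⟩ | ⟨h1, h2, h3⟩)
    · exact absurd ((bl_castSucc s x.1).mp h1) x.2
    · have e1 : low s x.1.castSucc h1 = x := Subtype.ext (by simp [low])
      have e2 : low s y.1.castSucc h2 = y := Subtype.ext (by simp [low])
      rwa [e1, e2] at h3
  · intro h
    have hx : ¬ bl s x.1.castSucc := fun hc => x.2 ((bl_castSucc s x.1).mp hc)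
    have hy : ¬ bl s y.1.castSucc := fun hc => y.2 ((bl_castSucc s y.1).mp hc)
    refine Or.inr ⟨hx, hy, ?_⟩
    have e1 : low s x.1.castSucc hx = x := Subtype.ext (by simp [low])
    have e2 : low s y.1.castSucc hy = y := Subtype.ext (by simp [low])
    rw [e1, e2]
    exact h

lemma card_fiber (s : Finset (Fin m)) :
    Nat.card {r : Setoid (Fin (m+1)) // blockLast r = s} = bell (m - s.card) := by
  have e : {r : Setoid (Fin (m+1)) // blockLast r = s} ≃ Setoid {v : Fin m // v ∉ s} :=
    { toFun := fun x => Setoid.comap (fun v : {v : Fin m // v ∉ s} =>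
        (v.1.castSucc : Fin (m+1))) x.1
      invFun := fun r' => ⟨glue s r', blockLast_glue s r'⟩
      left_inv := fun x => by
        rcases x with ⟨r, hr⟩
        subst hr
        exact Subtype.ext (glue_restr r)
      right_inv := fun r' => restr_glue s r' }
  rw [Nat.card_congr e]
  have hcard : Fintype.card {v : Fin m // v ∉ s} = m - s.card := by
    simp [Fintype.card_subtype_compl]
  rw [bell_card (α := {v : Fin m // v ∉ s}), hcard]

lemma bell_rec (m : ℕ) : bell (m+1) = ∑ i ∈ Finset.range (m+1), m.choose i * bell i := by
  have h1 : bell (m+1) = ∑ s : Finset (Fin m), bell (m - s.card) := by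
    rw [bell, Nat.card_congr (Equiv.sigmaFiberEquiv (blockLast (m := m))).symm, nat_card_sigma]
    exact sum_congr rfl fun s _ => card_fiber s
  rw [h1]
  have h2 : ∑ s : Finset (Fin m), bell (m - s.card) =
      ∑ j ∈ Finset.range (m+1), m.choose j * bell (m - j) := by
    rw [show (Finset.univ : Finset (Finset (Fin m))) = (Finset.univ : Finset (Fin m)).powerset from
      (Finset.powerset_univ).symm]
    rw [Finset.powerset_card_disjiUnion]
    erw [Finset.sum_disjiUnion]
    rw [show (Finset.univ : Finset (Fin m)).card = m by simp]
    apply sum_congr rfl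
    intro j _
    rw [Finset.sum_powersetCard j Finset.univ (fun c => bell (m - c))]
    rw [show (Finset.univ : Finset (Fin m)).card = m by simp]
    simp [mul_comm]
  rw [h2]
  have h3 : ∀ j ∈ Finset.range (m+1), m.choose j * bell (m - j) =
      (fun i => m.choose (m - i) * bell i) (m - j) := by
    intro j hj
    rw [Finset.mem_range] at hj
    simp only
    rw [Nat.sub_sub_self (by omega)]
  rw [sum_congr rfl h3, Finset.sum_flip (fun i => m.choose (m - i) * bell i)]
  apply sum_congr rfl
  intro j hj
  rw [Finset.mem_range] at hj
  rw [Nat.choose_symm (by omega)]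

lemma bell_zero : bell 0 = 1 := by
  have : Unique (Setoid (Fin 0)) :=
    ⟨⟨⟨fun _ _ => True, ⟨fun _ => trivial, fun {_ _} _ => trivial, fun {_ _ _} _ _ => trivial⟩⟩⟩,
      fun r => Setoid.ext fun a => a.elim0⟩
  rw [bell, Nat.card_unique]

lemma bell_one : bell 1 = 1 := by
  have : Unique (Setoid (Fin 1)) :=
    ⟨⟨⟨fun _ _ => True, ⟨fun _ => trivial, fun {_ _} _ => trivial, fun {_ _ _} _ _ => trivial⟩⟩⟩,
      fun r => Setoid.ext fun a b => by
        have : a = b := Subsingleton.elim a b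
        subst this
        exact ⟨fun _ => trivial, fun _ => r.refl a⟩⟩
  rw [bell, Nat.card_unique]


noncomputable def bellZ (m : ℕ) : ℤ := (bell m : ℤ)

/-- iterated backward difference, indexed so that `nab f j N = ∇^j f_N`. -/
noncomputable def nab (f : ℕ → ℤ) (j N : ℕ) : ℤ :=
  ∑ i ∈ Finset.range (j+1), (-1 : ℤ)^i * (j.choose i) * f (N - i)

lemma nab_zero (f : ℕ → ℤ) (N : ℕ) : nab f 0 N = f N := by
  simp [nab]

lemma nab_succ (f : ℕ → ℤ) (j N : ℕ) : nab f (j+1) N = nab f j N - nab f j (N-1) := by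
  have e0 : nab f (j+1) N =
      ∑ i ∈ Finset.range (j+1), (-1:ℤ)^(i+1) * ((j+1).choose (i+1)) * f (N - (i+1)) + f N := by
    unfold nab
    rw [Finset.sum_range_succ' (fun i => (-1 : ℤ)^i * ((j+1).choose i) * f (N - i)) (j+1)]
    simp
  have e1 : ∀ i ∈ Finset.range (j+1), (-1:ℤ)^(i+1) * ((j+1).choose (i+1)) * f (N - (i+1)) =
      -((-1:ℤ)^i * (j.choose i) * f (N - 1 - i)) + (-1:ℤ)^(i+1) * (j.choose (i+1)) * f (N - (i+1)) := by
    intro i _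
    rw [Nat.choose_succ_succ' j i]
    have : N - (i+1) = N - 1 - i := by omega
    rw [this, pow_succ]
    push_cast
    ring
  rw [e0, Finset.sum_congr rfl e1, Finset.sum_add_distrib]
  have e2 : ∑ i ∈ Finset.range (j+1), -((-1:ℤ)^i * (j.choose i) * f (N - 1 - i)) =
      - nab f j (N-1) := by
    unfold nab
    rw [← Finset.sum_neg_distrib]
  have e3 : ∑ i ∈ Finset.range (j+1), (-1:ℤ)^(i+1) * (j.choose (i+1)) * f (N - (i+1)) =
      ∑ i ∈ Finset.range j, (-1:ℤ)^(i+1) * (j.choose (i+1)) * f (N - (i+1)) := by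
    rw [Finset.sum_range_succ]
    simp [Nat.choose_eq_zero_of_lt (Nat.lt_succ_self j)]
  have e4 : nab f j N = ∑ i ∈ Finset.range j, (-1:ℤ)^(i+1) * (j.choose (i+1)) * f (N - (i+1)) + f N := by
    unfold nab
    rw [Finset.sum_range_succ' (fun i => (-1 : ℤ)^i * (j.choose i) * f (N - i)) j]
    simp
  rw [e2, e3]
  rw [e4]
  ring

lemma choose_swap {m s i : ℕ} (hs : s ≤ m) (hi : i ≤ m) :
    m.choose s * (m-s).choose i = m.choose i * (m-i).choose s := by
  by_cases h : s + i ≤ m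
  · have e1 : m.choose (s+i) * (s+i).choose s = m.choose s * (m-s).choose ((s+i)-s) :=
      Nat.choose_mul (Nat.le_add_right s i)
    have e2 : m.choose (i+s) * (i+s).choose i = m.choose i * (m-i).choose ((i+s)-i) :=
      Nat.choose_mul (Nat.le_add_right i s)
    rw [Nat.add_sub_cancel_left] at e1
    rw [Nat.add_sub_cancel_left] at e2
    have e3 : (s+i).choose s = (i+s).choose i := by
      rw [show s + i = i + s by omega]
      rw [← Nat.choose_symm (Nat.le_add_right i s)]
      congr 1
      omega
    rw [← e1, e3, show s + i = i + s by omega, e2]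
  · rw [Nat.choose_eq_zero_of_lt (by omega : m - s < i),
      Nat.choose_eq_zero_of_lt (by omega : m - i < s)]
    simp

lemma star (m : ℕ) : nab bellZ m (m+1) = bellZ m := by
  unfold nab
  have h1 : ∀ s ∈ Finset.range (m+1), (-1:ℤ)^s * (m.choose s) * bellZ (m+1-s) =
      ∑ i ∈ Finset.range (m+1), (-1:ℤ)^s * (m.choose s) * ((m-s).choose i) * bellZ i := by
    intro s hs
    rw [Finset.mem_range] at hs
    have hrec : bellZ (m+1-s) = ∑ i ∈ Finset.range ((m-s)+1), ((m-s).choose i : ℤ) * bellZ i := by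
      have : m + 1 - s = (m - s) + 1 := by omega
      rw [this]
      unfold bellZ
      rw [bell_rec]
      push_cast
      rfl
    have hext : ∑ i ∈ Finset.range ((m-s)+1), ((m-s).choose i : ℤ) * bellZ i =
        ∑ i ∈ Finset.range (m+1), ((m-s).choose i : ℤ) * bellZ i := by
      apply Finset.sum_subset
      · apply Finset.range_subset_range.mpr; omega
      · intro i _ hni
        rw [Finset.mem_range, not_lt] at hni
        rw [Nat.choose_eq_zero_of_lt (by omega)]
        simp
    rw [hrec, hext, Finset.mul_sum]
    apply Finset.sum_congr rfl
    intro i _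
    ring
  rw [Finset.sum_congr rfl h1, Finset.sum_comm]
  have h2 : ∀ i ∈ Finset.range (m+1),
      ∑ s ∈ Finset.range (m+1), (-1:ℤ)^s * (m.choose s) * ((m-s).choose i) * bellZ i =
      (if i = m then 1 else 0) * bellZ i := by
    intro i hi
    rw [Finset.mem_range] at hi
    have h3 : ∀ s ∈ Finset.range (m+1), (-1:ℤ)^s * (m.choose s) * ((m-s).choose i) * bellZ i =
        (m.choose i : ℤ) * ((-1:ℤ)^s * ((m-i).choose s)) * bellZ i := by
      intro s hs
      rw [Finset.mem_range] at hs
      have := choose_swap (show s ≤ m by omega) (show i ≤ m by omega)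
      have hz : ((m.choose s : ℤ) * ((m-s).choose i : ℤ)) = (m.choose i : ℤ) * ((m-i).choose s : ℤ) := by
        exact_mod_cast congrArg (Nat.cast : ℕ → ℤ) this
      calc (-1:ℤ)^s * (m.choose s) * ((m-s).choose i) * bellZ i
          = (-1:ℤ)^s * ((m.choose s : ℤ) * ((m-s).choose i)) * bellZ i := by ring
        _ = (-1:ℤ)^s * ((m.choose i : ℤ) * ((m-i).choose s)) * bellZ i := by rw [hz]
        _ = (m.choose i : ℤ) * ((-1:ℤ)^s * ((m-i).choose s)) * bellZ i := by ring
    rw [Finset.sum_congr rfl h3]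
    rw [← Finset.sum_mul, ← Finset.mul_sum]
    have h4 : ∑ s ∈ Finset.range (m+1), (-1:ℤ)^s * ((m-i).choose s) =
        ∑ s ∈ Finset.range ((m-i)+1), (-1:ℤ)^s * ((m-i).choose s) := by
      symm
      apply Finset.sum_subset
      · apply Finset.range_subset_range.mpr; omega
      · intro s _ hns
        rw [Finset.mem_range, not_lt] at hns
        rw [Nat.choose_eq_zero_of_lt (by omega)]
        simp
    rw [h4, Int.alternating_sum_range_choose]
    by_cases him : i = m
    · subst him
      simp
    · rw [if_neg (by omega), if_neg him]
      simp
  rw [Finset.sum_congr rfl h2]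
  have : ∀ x ∈ Finset.range (m+1), (if x = m then (1:ℤ) else 0) * bellZ x =
      (if x = m then bellZ x else 0) := by
    intro x _
    split_ifs <;> simp
  rw [Finset.sum_congr rfl this, Finset.sum_ite_eq' (Finset.range (m+1)) m bellZ]
  simp


noncomputable def T (n : ℕ) : ℕ := Nat.card {π : Equiv.Perm (Fin n) // Avoids32d1 π}
noncomputable def A (n : ℕ) (k : Fin (n+1)) : ℕ :=
  Nat.card {π : Equiv.Perm (Fin (n+1)) // Avoids32d1 π ∧ π ⟨0, n.succ_pos⟩ = k}

lemma A_zero (n : ℕ) : A n ⟨0, n.succ_pos⟩ = T n := card_first_zero n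

lemma A_one (n : ℕ) (h1 : 1 < n + 1) : A n ⟨0, n.succ_pos⟩ = A n ⟨1, h1⟩ :=
  card_first_zero_eq_one n h1

lemma A_step (m : ℕ) (k : Fin (m+2)) (hk1 : 0 < k.1) (hk : k.1 + 1 < m + 2) :
    A (m+1) k = A (m+1) ⟨k.1+1, hk⟩ + A m ⟨k.1, by omega⟩ := by
  rw [show A (m+1) k = Nat.card {π : Equiv.Perm (Fin (m+2)) // Avoids32d1 π ∧
    π ⟨0, (m+1).succ_pos⟩ = k} from rfl]
  rw [card_first_step (m+1) k hk hk1 (by omega)]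
  congr 1
  exact card_step_del (m+1) k hk (by omega) (by omega) (by omega)

lemma T_sum (n : ℕ) : T (n+1) = ∑ k : Fin (n+1), A n k := card_total n

lemma tele (f : ℕ → ℤ) (M N : ℕ) :
    ∑ j ∈ Finset.range M, nab f j N = f (N+1) - nab f M (N+1) := by
  have h : ∀ j, nab f j N = nab f j (N+1) - nab f (j+1) (N+1) := by
    intro j
    have := nab_succ f j (N+1)
    rw [Nat.add_sub_cancel] at this
    linarith
  calc ∑ j ∈ Finset.range M, nab f j N
      = ∑ j ∈ Finset.range M, (nab f j (N+1) - nab f (j+1) (N+1)) :=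
        Finset.sum_congr rfl fun j _ => h j
    _ = nab f 0 (N+1) - nab f M (N+1) := Finset.sum_range_sub' (fun j => nab f j (N+1)) M
    _ = f (N+1) - nab f M (N+1) := by rw [nab_zero]

lemma T_one : T 1 = 1 := by
  have hav : ∀ π : Equiv.Perm (Fin 1), Avoids32d1 π := by
    rintro π ⟨i, j, h, _⟩
    omega
  haveI : Unique {π : Equiv.Perm (Fin 1) // Avoids32d1 π} :=
    ⟨⟨⟨1, hav 1⟩⟩, fun x => Subtype.ext (Equiv.ext fun v => Subsingleton.elim _ _)⟩
  rw [T, Nat.card_unique]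

lemma master (n : ℕ) : (T (n+1) = bell (n+1)) ∧
    (∀ k : Fin (n+1), ∀ j : ℕ, k.1 = j + 1 → (A n k : ℤ) = nab bellZ j n) := by
  induction n with
  | zero =>
    refine ⟨by rw [T_one, bell_one], ?_⟩
    intro k j hk
    have := k.isLt
    omega
  | succ m ih =>
    have hA0 : (A (m+1) ⟨0, (m+1).succ_pos⟩ : ℕ) = bell (m+1) := by
      rw [A_zero]; exact ih.1
    have claim : ∀ j : ℕ, ∀ hj : j + 1 < m + 2, (A (m+1) ⟨j+1, hj⟩ : ℤ) = nab bellZ j (m+1) := by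
      intro j
      induction j with
      | zero =>
        intro hj
        rw [nab_zero]
        have := A_one (m+1) (by omega)
        have e : (⟨0+1, hj⟩ : Fin (m+2)) = ⟨1, by omega⟩ := rfl
        rw [e, ← this, hA0]
        rfl
      | succ t iht =>
        intro hj
        have hy1 : t + 1 < m + 2 := by omega
        have hy1' : 0 < t + 1 := by omega
        have hy2 : t + 1 < m + 1 := by omega
        have hstep := A_step m ⟨t+1, hy1⟩ (by show 0 < t+1; omega) (by show t+1+1 < m+2; omega)
        have hstepZ : (A (m+1) ⟨t+1, hy1⟩ : ℤ) =
            (A (m+1) ⟨t+1+1, hj⟩ : ℤ) + (A m ⟨t+1, hy2⟩ : ℤ) := by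
          exact_mod_cast hstep
        have h1 : (A (m+1) ⟨t+1, hy1⟩ : ℤ) = nab bellZ t (m+1) := iht hy1
        have h2 : (A m ⟨t+1, hy2⟩ : ℤ) = nab bellZ t m := ih.2 ⟨t+1, hy2⟩ t rfl
        have hns := nab_succ bellZ t (m+1)
        rw [Nat.add_sub_cancel] at hns
        linarith [hstepZ, h1, h2, hns]
    constructor
    · -- T (m+2) = bell (m+2)
      have hsum := T_sum (m+1)
      have : (T (m+2) : ℤ) = (bell (m+2) : ℤ) := by
        rw [hsum]
        push_cast
        rw [Fin.sum_univ_succ (f := fun k : Fin (m+2) => (A (m+1) k : ℤ))]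
        have e0 : (0 : Fin (m+2)) = ⟨0, (m+1).succ_pos⟩ := rfl
        have h1 : ∑ i : Fin (m+1), (A (m+1) i.succ : ℤ) =
            ∑ i : Fin (m+1), nab bellZ i.1 (m+1) := by
          apply Finset.sum_congr rfl
          intro i _
          have e : (i.succ : Fin (m+2)) = ⟨i.1+1, by omega⟩ := rfl
          rw [e, claim i.1 (by omega)]
        rw [e0, h1, hA0]
        have h2 : ∑ i : Fin (m+1), nab bellZ i.1 (m+1) =
            ∑ j ∈ Finset.range (m+1), nab bellZ j (m+1) := by
          exact Fin.sum_univ_eq_sum_range (fun j => nab bellZ j (m+1)) (m+1)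
        rw [h2, tele bellZ (m+1) (m+1), star (m+1)]
        show (bell (m+1) : ℤ) + (bellZ (m+2) - bellZ (m+1)) = (bell (m+2) : ℤ)
        unfold bellZ
        ring
      exact_mod_cast this
    · intro k j hk
      have e : k = ⟨j+1, by omega⟩ := Fin.ext hk
      rw [e]
      exact claim j (by omega)

end BellDist

theorem bell_distribution (n : ℕ) (hn : 2 ≤ n) :
    Nat.card {π : Equiv.Perm (Fin n) // Avoids32d1 π ∧ π ⟨0, by omega⟩ = ⟨0, by omega⟩} = bell (n - 1) ∧
    ∀ k : ℕ, (hk1 : 2 ≤ k) → (hk2 : k ≤ n) →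
      (Nat.card {π : Equiv.Perm (Fin n) // Avoids32d1 π ∧ π ⟨0, by omega⟩ = ⟨k - 1, by omega⟩} : ℤ) =
        ∑ i ∈ Finset.range (k - 1), (-1 : ℤ) ^ i * (((k - 2)).choose i) * (bell (n - 1 - i) : ℤ) := by
  obtain ⟨t, rfl⟩ : ∃ t, n = t + 2 := ⟨n - 2, by omega⟩
  constructor
  · show BellDist.A (t+1) ⟨0, (t+1).succ_pos⟩ = bell (t + 2 - 1)
    rw [BellDist.A_zero, (BellDist.master t).1]
    rfl
  · intro k hk1 hk2
    have h1 : (Nat.card {π : Equiv.Perm (Fin (t+2)) // Avoids32d1 π ∧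
        π ⟨0, by omega⟩ = ⟨k - 1, by omega⟩} : ℤ) = (BellDist.A (t+1) ⟨k-1, by omega⟩ : ℤ) := rfl
    rw [h1, (BellDist.master (t+1)).2 ⟨k-1, by omega⟩ (k-2) (by show k-1 = k-2+1; omega)]
    unfold BellDist.nab
    have e : k - 2 + 1 = k - 1 := by omega
    rw [e]
    apply Finset.sum_congr rfl
    intro i _
    unfold BellDist.bellZ
    have e2 : t + 1 - i = t + 2 - 1 - i := by omega
    rw [e2]
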